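/- Let K be an infinite field of characteristic ≠ 2 and let j be the image in PSL_3(K) of the diagonal matrix diag(−1, −1, 1) ∈ SL_3(K). Then the commutator subgroup of the centralizer of j in PSL_3(K) is not abelian. -/

import Mathlib

open FirstOrder

/-- The function symbols of the first-order language of groups:
multiplication, inverse, and identity. -/
inductive GroupFunc : ℕ → Type
  | mul : GroupFunc 2
  | inv : GroupFunc 1
  | one : GroupFunc 0

/-- The first-order language of groups. -/
def groupLang : FirstOrder.Language :=
  { Functions := GroupFunc, Relations := fun _ => Empty }

/-- Any group is a structure for the language of groups in the natural way. -/
instance groupLangStructure (G : Type*) [Group G] : groupLang.Structure G where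
  funMap {_} f v :=
    match f with
    | GroupFunc.mul => v 0 * v 1
    | GroupFunc.inv => (v 0)⁻¹
    | GroupFunc.one => 1
  RelMap {_} r := r.elim

/-- Two groups are elementarily equivalent in the first-order language of groups
if they satisfy exactly the same first-order sentences of the group language. -/
def GroupElemEquiv (G H : Type*) [Group G] [Group H] : Prop :=
  groupLang.ElementarilyEquivalent G H

/-- Two rings are elementarily equivalent in the first-order language of rings
if they satisfy exactly the same first-order sentences of the ring language. -/
def RingElemEquiv (R S : Type*) [Ring R] [Ring S] : Prop :=
  letI := FirstOrder.Ring.compatibleRingOfRing R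
  letI := FirstOrder.Ring.compatibleRingOfRing S
  FirstOrder.Language.ring.ElementarilyEquivalent R S

/-- The matrix `diag(−1, −1, 1)` as an element of `SL_3(K)`. -/
def diagInvolutionSL3 (K : Type) [Field K] : Matrix.SpecialLinearGroup (Fin 3) K :=
  ⟨Matrix.diagonal ![(-1 : K), -1, 1], by
    norm_num [Matrix.det_diagonal, Fin.prod_univ_three]
    all_goals rfl⟩

variable (K : Type) [Field K]

open scoped commutatorElement

def myE (t : K) : Matrix.SpecialLinearGroup (Fin 3) K :=
  ⟨!![1, t, 0; 0, 1, 0; 0, 0, 1], by simp [Matrix.det_fin_three]⟩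

def myF (t : K) : Matrix.SpecialLinearGroup (Fin 3) K :=
  ⟨!![1, 0, 0; t, 1, 0; 0, 0, 1], by simp [Matrix.det_fin_three]⟩

def myD (a : K) (ha : a ≠ 0) : Matrix.SpecialLinearGroup (Fin 3) K :=
  ⟨!![a, 0, 0; 0, a⁻¹, 0; 0, 0, 1], by simp [Matrix.det_fin_three, ha]⟩

lemma myE_mul (u v : K) : myE K u * myE K v = myE K (u + v) := by
  ext i j
  fin_cases i <;> fin_cases j <;>
    · simp only [Matrix.SpecialLinearGroup.coe_mul]; simp [myE, Matrix.mul_fin_three]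
      try ring

lemma myE_zero : myE K 0 = 1 := by
  ext i j
  fin_cases i <;> fin_cases j <;>
    simp [myE, Matrix.vecHead, Matrix.vecTail, Matrix.one_apply]

lemma myE_inv (u : K) : (myE K u)⁻¹ = myE K (-u) := by
  apply inv_eq_of_mul_eq_one_right
  rw [myE_mul]; simp [myE_zero]

lemma myF_mul (u v : K) : myF K u * myF K v = myF K (u + v) := by
  ext i j
  fin_cases i <;> fin_cases j <;>
    · simp only [Matrix.SpecialLinearGroup.coe_mul]; simp [myF, Matrix.mul_fin_three]
      try ring

lemma myF_zero : myF K 0 = 1 := by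
  ext i j
  fin_cases i <;> fin_cases j <;>
    simp [myF, Matrix.vecHead, Matrix.vecTail, Matrix.one_apply]

lemma myF_inv (u : K) : (myF K u)⁻¹ = myF K (-u) := by
  apply inv_eq_of_mul_eq_one_right
  rw [myF_mul]; simp [myF_zero]

lemma jcoe : (diagInvolutionSL3 K : Matrix (Fin 3) (Fin 3) K) =
    !![-1, 0, 0; 0, -1, 0; 0, 0, 1] := by
  ext i j
  fin_cases i <;> fin_cases j <;>
    simp [diagInvolutionSL3, Matrix.diagonal, Matrix.vecHead, Matrix.vecTail]

lemma myD_comm_j (a : K) (ha : a ≠ 0) :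
    diagInvolutionSL3 K * myD K a ha = myD K a ha * diagInvolutionSL3 K := by
  ext i j
  fin_cases i <;> fin_cases j <;>
    (simp only [Matrix.SpecialLinearGroup.coe_mul]; simp [myD, jcoe, Matrix.mul_fin_three, Matrix.diagonal,
      Matrix.vecHead, Matrix.vecTail])

lemma myE_comm_j (t : K) :
    diagInvolutionSL3 K * myE K t = myE K t * diagInvolutionSL3 K := by
  ext i j
  fin_cases i <;> fin_cases j <;>
    (simp only [Matrix.SpecialLinearGroup.coe_mul]; simp [myE, jcoe, Matrix.mul_fin_three, Matrix.diagonal,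
      Matrix.vecHead, Matrix.vecTail])

lemma myF_comm_j (t : K) :
    diagInvolutionSL3 K * myF K t = myF K t * diagInvolutionSL3 K := by
  ext i j
  fin_cases i <;> fin_cases j <;>
    (simp only [Matrix.SpecialLinearGroup.coe_mul]; simp [myF, jcoe, Matrix.mul_fin_three, Matrix.diagonal,
      Matrix.vecHead, Matrix.vecTail])

lemma myD_mul_myE (a : K) (ha : a ≠ 0) :
    myD K a ha * myE K 1 = myE K (a ^ 2) * myD K a ha := by
  ext i j
  fin_cases i <;> fin_cases j <;>
    · simp only [Matrix.SpecialLinearGroup.coe_mul]; simp [myD, myE, Matrix.mul_fin_three]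
      try field_simp
      try ring

lemma myD_mul_myF (a : K) (ha : a ≠ 0) :
    myD K a ha * myF K 1 = myF K (a⁻¹ ^ 2) * myD K a ha := by
  ext i j
  fin_cases i <;> fin_cases j <;>
    · simp only [Matrix.SpecialLinearGroup.coe_mul]; simp [myD, myF, Matrix.mul_fin_three]
      try field_simp
      try ring

lemma commE (a : K) (ha : a ≠ 0) : ⁅myD K a ha, myE K 1⁆ = myE K (a ^ 2 - 1) := by
  rw [commutatorElement_def, myD_mul_myE K a ha, mul_inv_cancel_right, myE_inv, myE_mul]
  ring_nf

lemma commF (a : K) (ha : a ≠ 0) : ⁅myD K a ha, myF K 1⁆ = myF K (a⁻¹ ^ 2 - 1) := by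
  rw [commutatorElement_def, myD_mul_myF K a ha, mul_inv_cancel_right, myF_inv, myF_mul]
  ring_nf

lemma Acoe (u v : K) : ((myE K u * myF K v : Matrix.SpecialLinearGroup (Fin 3) K) :
    Matrix (Fin 3) (Fin 3) K) = !![1 + u * v, u, 0; v, 1, 0; 0, 0, 1] := by
  ext i j
  fin_cases i <;> fin_cases j <;>
    · simp only [Matrix.SpecialLinearGroup.coe_mul]; simp [myE, myF, Matrix.mul_fin_three]
      try ring

lemma Bcoe (u v : K) : ((myF K v * myE K u : Matrix.SpecialLinearGroup (Fin 3) K) :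
    Matrix (Fin 3) (Fin 3) K) = !![1, u, 0; v, 1 + v * u, 0; 0, 0, 1] := by
  ext i j
  fin_cases i <;> fin_cases j <;>
    · simp only [Matrix.SpecialLinearGroup.coe_mul]; simp [myE, myF, Matrix.mul_fin_three]
      try ring

lemma key_ne (u v : K) (hu : u ≠ 0) (hv : v ≠ 0) :
    (QuotientGroup.mk (myE K u * myF K v) :
      Matrix.SpecialLinearGroup (Fin 3) K ⧸
        Subgroup.center (Matrix.SpecialLinearGroup (Fin 3) K)) ≠
    QuotientGroup.mk (myF K v * myE K u) := by
  intro h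
  rw [QuotientGroup.eq] at h
  obtain ⟨r, hr3, hr⟩ := Matrix.SpecialLinearGroup.mem_center_iff.mp h
  set A := myE K u * myF K v
  set B := myF K v * myE K u
  have hB : B = A * (A⁻¹ * B) := by rw [mul_inv_cancel_left]
  have hmat : (B : Matrix (Fin 3) (Fin 3) K) =
      (A : Matrix (Fin 3) (Fin 3) K) * Matrix.scalar (Fin 3) r := by
    rw [hB, Matrix.SpecialLinearGroup.coe_mul, hr]
  rw [Acoe, Bcoe] at hmat
  have h22 : (1 : K) = r := by
    have := congrFun (congrFun hmat 2) 2
    simpa [Matrix.mul_apply, Fin.sum_univ_three, Matrix.scalar_apply,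
      Matrix.diagonal, Matrix.vecHead, Matrix.vecTail] using this
  have h11 : (1 : K) + v * u = r := by
    have := congrFun (congrFun hmat 1) 1
    simpa [Matrix.mul_apply, Fin.sum_univ_three, Matrix.scalar_apply,
      Matrix.diagonal, Matrix.vecHead, Matrix.vecTail] using this
  have : v * u = 0 := by
    have := h11.trans h22.symm
    linear_combination this
  rcases mul_eq_zero.mp this with h' | h'
  · exact hv h'
  · exact hu h'


/-- Over an infinite field `K` of characteristic `≠ 2`, the commutator subgroup of the
centralizer in `PSL_3(K)` of the image of `diag(−1, −1, 1) ∈ SL_3(K)` is not abelian. -/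
theorem commutator_of_centralizer_of_involution_psl3_not_abelian
    (K : Type) [Field K] [Infinite K] (hchar : ringChar K ≠ 2) :
    ∃ x y : ↥(commutator ↥(Subgroup.centralizer
        ({(QuotientGroup.mk (diagInvolutionSL3 K) :
            Matrix.SpecialLinearGroup (Fin 3) K ⧸
              Subgroup.center (Matrix.SpecialLinearGroup (Fin 3) K))} :
          Set (Matrix.SpecialLinearGroup (Fin 3) K ⧸
            Subgroup.center (Matrix.SpecialLinearGroup (Fin 3) K))))),
      x * y ≠ y * x := by
  classical
  obtain ⟨a, haS⟩ := Infinite.exists_notMem_finset ({0, 1, -1} : Finset K)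
  simp only [Finset.mem_insert, Finset.mem_singleton, not_or] at haS
  obtain ⟨ha0, ha1, ham1⟩ := haS
  set SL := Matrix.SpecialLinearGroup (Fin 3) K
  set PSL := SL ⧸ Subgroup.center SL
  set π : SL → PSL := QuotientGroup.mk
  set C := Subgroup.centralizer
    ({(π (diagInvolutionSL3 K))} : Set PSL) with hC
  -- facts about π
  have hπmul : ∀ g h : SL, π (g * h) = π g * π h := fun _ _ => rfl
  have hπcomm : ∀ g h : SL, ⁅π g, π h⁆ = π ⁅g, h⁆ := by
    intro g h
    rfl
  -- centralizer memberships
  have hmem : ∀ g : SL, diagInvolutionSL3 K * g = g * diagInvolutionSL3 K → π g ∈ C := by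
    intro g hg
    rw [hC, Subgroup.mem_centralizer_iff]
    rintro x hx
    rw [Set.mem_singleton_iff] at hx
    subst hx
    rw [← hπmul, ← hπmul, hg]
  have hdmem := hmem _ (myD_comm_j K a ha0)
  have hemem := hmem _ (myE_comm_j K 1)
  have hfmem := hmem _ (myF_comm_j K 1)
  set cd : ↥C := ⟨π (myD K a ha0), hdmem⟩
  set ce : ↥C := ⟨π (myE K 1), hemem⟩
  set cf : ↥C := ⟨π (myF K 1), hfmem⟩
  have hxmem : ⁅cd, ce⁆ ∈ commutator ↥C := by
    rw [commutator_def]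
    exact Subgroup.commutator_mem_commutator (Subgroup.mem_top _) (Subgroup.mem_top _)
  have hymem : ⁅cd, cf⁆ ∈ commutator ↥C := by
    rw [commutator_def]
    exact Subgroup.commutator_mem_commutator (Subgroup.mem_top _) (Subgroup.mem_top _)
  refine ⟨⟨⁅cd, ce⁆, hxmem⟩, ⟨⁅cd, cf⁆, hymem⟩, ?_⟩
  intro hcontra
  have h1 : ⁅cd, ce⁆ * ⁅cd, cf⁆ = ⁅cd, cf⁆ * ⁅cd, ce⁆ := by
    have := congrArg Subtype.val hcontra
    simpa using this
  have h2 : π ⁅myD K a ha0, myE K 1⁆ * π ⁅myD K a ha0, myF K 1⁆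
      = π ⁅myD K a ha0, myF K 1⁆ * π ⁅myD K a ha0, myE K 1⁆ := by
    have := congrArg (C.subtype) h1
    simp only [map_mul, map_commutatorElement] at this
    simpa [hπcomm, cd, ce, cf] using this
  rw [commE K a ha0, commF K a ha0, ← hπmul, ← hπmul] at h2
  -- nonvanishing of u and v
  have ha1' : a - 1 ≠ 0 := sub_ne_zero.mpr ha1
  have ham1' : a + 1 ≠ 0 := fun h => ham1 (by linear_combination h)
  have hu : a ^ 2 - 1 ≠ 0 := by
    have : a ^ 2 - 1 = (a - 1) * (a + 1) := by ring
    rw [this]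
    exact mul_ne_zero ha1' ham1'
  have hv : a⁻¹ ^ 2 - 1 ≠ 0 := by
    intro h
    apply hu
    have h' : a⁻¹ ^ 2 = 1 := by linear_combination h
    have : a ^ 2 * a⁻¹ ^ 2 = a ^ 2 := by rw [h', mul_one]
    rw [← mul_pow, mul_inv_cancel₀ ha0, one_pow] at this
    linear_combination -this
  exact key_ne K _ _ hu hv h2
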